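/- Let K = (X, (→_a)_{a∈Σ}, ρ) be a Kripke structure over Σ, let A = {(i,j) ∈ ℕ×ℕ : j ≤ i}, and let (x_{i,j})_{(i,j)∈A} be worlds of X such that for every r ∈ ℕ: (x_{2r,0}, x_{2r+1,0}) ∈ [[d a₂ b₁]]; (x_{2r,s}, x_{2r,s−1}) ∈ [[a₁ b₂]] for all 1 ≤ s ≤ 2r; (x_{2r+1,2r+1}, x_{2r+2,2r+2}) ∈ [[c a₁ b₂]]; and (x_{2r+1,s}, x_{2r+1,s+1}) ∈ [[a₂ b₁]] for all 0 ≤ s ≤ 2r. Then for all r ∈ ℕ: (x_{2r,s}, x_{2r+1,s}) ∈ [[L₀↔]] and (x_{2r,s}, x_{2r+1,s+1}) ∈ [[L₀↕]] for all 0 ≤ s ≤ 2r, and (x_{2r+1,s}, x_{2r+2,s}) ∈ [[L₁↔]] and (x_{2r+1,s}, x_{2r+2,s+1}) ∈ [[L₁↕]] for all 0 ≤ s ≤ 2r+1. -/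

import Mathlib

/-- The six-letter alphabet `Σ = {a₁, a₂, b₁, b₂, c, d}`. -/
inductive Letter where
  | a1 | a2 | b1 | b2 | c | d
deriving DecidableEq

instance instFintypeLetter : Fintype Letter :=
  ⟨{.a1, .a2, .b1, .b2, .c, .d}, fun x => by cases x <;> simp⟩

/-- `w^i`: the `i`-fold concatenation of the word `w`. -/
def wpow (w : List Letter) (i : ℕ) : List Letter :=
  (List.replicate i w).flatten

/-- Given a Kripke structure with transition relations `R a` for each letter `a`, the
relation `[[w]]` of a word `w`: the relational composition of the `R a` along `w`
(the identity for the empty word). -/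
def wordRel {X : Type} (R : Letter → X → X → Prop) : List Letter → X → X → Prop
  | [] => fun x y => x = y
  | a :: w => fun x z => ∃ y, R a x y ∧ wordRel R w y z


/-- `L₀↔ = {(a₁b₂)^t d (a₂b₁)^{t+1} : t ≥ 0}`. -/
def L0ew : Set (List Letter) :=
  {w | ∃ t : ℕ, w = wpow [.a1, .b2] t ++ [.d] ++ wpow [.a2, .b1] (t + 1)}

/-- `L₁↔ = {(a₂b₁)^t c (a₁b₂)^{t+2} : t ≥ 0}`. -/
def L1ew : Set (List Letter) :=
  {w | ∃ t : ℕ, w = wpow [.a2, .b1] t ++ [.c] ++ wpow [.a1, .b2] (t + 2)}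

/-- `L₀↕ = {(a₁b₂)^t d (a₂b₁)^{t+2} : t ≥ 0}`. -/
def L0ns : Set (List Letter) :=
  {w | ∃ t : ℕ, w = wpow [.a1, .b2] t ++ [.d] ++ wpow [.a2, .b1] (t + 2)}

/-- `L₁↕ = {(a₂b₁)^t c (a₁b₂)^{t+1} : t ≥ 0}`. -/
def L1ns : Set (List Letter) :=
  {w | ∃ t : ℕ, w = wpow [.a2, .b1] t ++ [.c] ++ wpow [.a1, .b2] (t + 1)}


lemma wpow_succ (w : List Letter) (i : ℕ) : wpow w (i+1) = w ++ wpow w i := by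
  simp [wpow, List.replicate_succ]

lemma wordRel_comp {X : Type} (R : Letter → X → X → Prop) :
    ∀ (u v : List Letter) (x y z : X), wordRel R u x y → wordRel R v y z →
      wordRel R (u ++ v) x z := by
  intro u
  induction u with
  | nil => intro v x y z h1 h2; cases h1; simpa using h2
  | cons a w ih =>
    rintro v x y z ⟨m, hm, hw⟩ h2
    exact ⟨m, hm, ih v m y z hw h2⟩

section
variable {X : Type} (R : Letter → X → X → Prop) (x : ℕ → ℕ → X)

lemma down_lem
    (h2 : ∀ r s : ℕ, 1 ≤ s → s ≤ 2 * r →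
      wordRel R [.a1, .b2] (x (2 * r) s) (x (2 * r) (s - 1))) :
    ∀ (r k s : ℕ), s + k ≤ 2 * r →
      wordRel R (wpow [.a1, .b2] k) (x (2 * r) (s + k)) (x (2 * r) s) := by
  intro r k
  induction k with
  | zero => intro s _; simp [wpow, wordRel]
  | succ k ih =>
    intro s hs
    rw [wpow_succ]
    have step := h2 r (s + k + 1) (by omega) (by omega)
    have : s + k + 1 - 1 = s + k := by omega
    rw [this] at step
    exact wordRel_comp R _ _ _ _ _ step (ih s (by omega))

lemma up_lem
    (h4 : ∀ r s : ℕ, s ≤ 2 * r →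
      wordRel R [.a2, .b1] (x (2 * r + 1) s) (x (2 * r + 1) (s + 1))) :
    ∀ (r k s : ℕ), s + k ≤ 2 * r + 1 →
      wordRel R (wpow [.a2, .b1] k) (x (2 * r + 1) s) (x (2 * r + 1) (s + k)) := by
  intro r k
  induction k with
  | zero => intro s _; simp [wpow, wordRel]
  | succ k ih =>
    intro s hs
    rw [wpow_succ]
    have step := h4 r s (by omega)
    have tail := ih (s + 1) (by omega)
    have : s + 1 + k = s + (k + 1) := by omega
    rw [this] at tail
    exact wordRel_comp R _ _ _ _ _ step tail

end

/-- Given a grid of worlds `x i j` (for `(i,j)` with `j ≤ i`) connected as in the snake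
(Figure 4), horizontally adjacent grid worlds are connected by `[[L₀↔]]` resp. `[[L₁↔]]`
and vertically adjacent ones by `[[L₀↕]]` resp. `[[L₁↕]]`. -/
theorem grid_connections {X : Type} (R : Letter → X → X → Prop)
    {P : Type} (ρ : X → Set P) (x : ℕ → ℕ → X)
    (h1 : ∀ r : ℕ, wordRel R [.d, .a2, .b1] (x (2 * r) 0) (x (2 * r + 1) 0))
    (h2 : ∀ r s : ℕ, 1 ≤ s → s ≤ 2 * r →
      wordRel R [.a1, .b2] (x (2 * r) s) (x (2 * r) (s - 1)))
    (h3 : ∀ r : ℕ, wordRel R [.c, .a1, .b2]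
      (x (2 * r + 1) (2 * r + 1)) (x (2 * r + 2) (2 * r + 2)))
    (h4 : ∀ r s : ℕ, s ≤ 2 * r →
      wordRel R [.a2, .b1] (x (2 * r + 1) s) (x (2 * r + 1) (s + 1))) :
    ∀ r : ℕ,
      (∀ s : ℕ, s ≤ 2 * r →
        (∃ w ∈ L0ew, wordRel R w (x (2 * r) s) (x (2 * r + 1) s)) ∧
        (∃ w ∈ L0ns, wordRel R w (x (2 * r) s) (x (2 * r + 1) (s + 1)))) ∧
      (∀ s : ℕ, s ≤ 2 * r + 1 →
        (∃ w ∈ L1ew, wordRel R w (x (2 * r + 1) s) (x (2 * r + 2) s)) ∧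
        (∃ w ∈ L1ns, wordRel R w (x (2 * r + 1) s) (x (2 * r + 2) (s + 1)))) := by
  intro r
  have down := down_lem R x h2
  have up := up_lem R x h4
  constructor
  · intro s hs
    have A : wordRel R (wpow [.a1, .b2] s) (x (2*r) s) (x (2*r) 0) := by
      have := down r s 0 (by omega); simpa using this
    have C : wordRel R (wpow [.a2, .b1] s) (x (2*r+1) 0) (x (2*r+1) s) := by
      have := up r s 0 (by omega); simpa using this
    have C' : wordRel R (wpow [.a2, .b1] (s+1)) (x (2*r+1) 0) (x (2*r+1) (s+1)) := by
      have := up r (s+1) 0 (by omega); simpa using this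
    have B : wordRel R ([.d] : List Letter) (x (2*r) 0) (x (2*r) 0) ∨ True := Or.inr trivial
    have hB := h1 r
    constructor
    · refine ⟨_, ⟨s, rfl⟩, ?_⟩
      have hw : wpow [Letter.a1, Letter.b2] s ++ [Letter.d] ++ wpow [Letter.a2, Letter.b1] (s+1)
          = wpow [Letter.a1, Letter.b2] s ++ ([Letter.d, Letter.a2, Letter.b1] ++ wpow [Letter.a2, Letter.b1] s) := by
        rw [wpow_succ]; simp
      rw [hw]
      exact wordRel_comp R _ _ _ _ _ A (wordRel_comp R _ _ _ _ _ hB C)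
    · refine ⟨_, ⟨s, rfl⟩, ?_⟩
      have hw : wpow [Letter.a1, Letter.b2] s ++ [Letter.d] ++ wpow [Letter.a2, Letter.b1] (s+2)
          = wpow [Letter.a1, Letter.b2] s ++ ([Letter.d, Letter.a2, Letter.b1] ++ wpow [Letter.a2, Letter.b1] (s+1)) := by
        rw [show s+2 = (s+1)+1 by omega, wpow_succ]; simp
      rw [hw]
      exact wordRel_comp R _ _ _ _ _ A (wordRel_comp R _ _ _ _ _ hB C')
  · intro s hs
    set t := 2*r+1-s with ht
    have A : wordRel R (wpow [.a2, .b1] t) (x (2*r+1) s) (x (2*r+1) (2*r+1)) := by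
      have := up r t s (by omega)
      rw [show s + t = 2*r+1 by omega] at this; exact this
    have hB := h3 r
    have e2 : 2*(r+1) = 2*r+2 := by ring
    have C : wordRel R (wpow [.a1, .b2] (t+1)) (x (2*r+2) (2*r+2)) (x (2*r+2) s) := by
      have := down (r+1) (t+1) s (by omega)
      rw [e2, show s + (t+1) = 2*r+2 by omega] at this; exact this
    have C' : wordRel R (wpow [.a1, .b2] t) (x (2*r+2) (2*r+2)) (x (2*r+2) (s+1)) := by
      have := down (r+1) t (s+1) (by omega)
      rw [e2, show s + 1 + t = 2*r+2 by omega] at this; exact this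
    constructor
    · refine ⟨_, ⟨t, rfl⟩, ?_⟩
      have hw : wpow [Letter.a2, Letter.b1] t ++ [Letter.c] ++ wpow [Letter.a1, Letter.b2] (t+2)
          = wpow [Letter.a2, Letter.b1] t ++ ([Letter.c, Letter.a1, Letter.b2] ++ wpow [Letter.a1, Letter.b2] (t+1)) := by
        rw [show t+2 = (t+1)+1 by omega, wpow_succ]; simp
      rw [hw]
      exact wordRel_comp R _ _ _ _ _ A (wordRel_comp R _ _ _ _ _ hB C)
    · refine ⟨_, ⟨t, rfl⟩, ?_⟩
      have hw : wpow [Letter.a2, Letter.b1] t ++ [Letter.c] ++ wpow [Letter.a1, Letter.b2] (t+1)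
          = wpow [Letter.a2, Letter.b1] t ++ ([Letter.c, Letter.a1, Letter.b2] ++ wpow [Letter.a1, Letter.b2] t) := by
        rw [wpow_succ]; simp
      rw [hw]
      exact wordRel_comp R _ _ _ _ _ A (wordRel_comp R _ _ _ _ _ hB C')
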